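/- Let κ, k, μ, b, c₁, c₂, n, p ∈ ℝ with κ ≠ 0, k ≠ 0, n ≠ 0, p ≠ 0 and p ≠ 1. Let V : ℝ → ℝ be twice differentiable on (0,∞) with V'(r) > 0 and (V'(r))^p = c₁·r^(1−n) − (μ/(n·κ))·r for all r > 0, where all powers are real powers (Real.rpow). Define u(t,r) = exp(k·t)·(c₂ + V(r)) + (μ/((p−1)·k))·exp(k·p·t) − b/k. Then u_r(t,r) > 0 for all t ∈ ℝ and r > 0, and u satisfies the radial p-Laplacian diffusion–reaction equation u_t(t,r) = −κ·(p·u_r(t,r)^(p−1)·u_rr(t,r) + ((n−1)/r)·u_r(t,r)^p) + k·u(t,r) + b for all t ∈ ℝ and r > 0. -/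

import Mathlib

noncomputable section

/-- Partial derivative in the first (time) variable. -/
def partial_t (u : ℝ → ℝ → ℝ) (t r : ℝ) : ℝ := deriv (fun s => u s r) t

/-- Partial derivative in the second (space) variable. -/
def partial_r (u : ℝ → ℝ → ℝ) (t r : ℝ) : ℝ := deriv (fun s => u t s) r

/-- Second partial derivative in the second (space) variable. -/
def partial_rr (u : ℝ → ℝ → ℝ) (t r : ℝ) : ℝ := deriv (deriv (fun s => u t s)) r

/-- Mixed partial derivative: first in space, then in time. -/
def partial_tr (u : ℝ → ℝ → ℝ) (t r : ℝ) : ℝ := deriv (fun s => deriv (fun y => u s y) r) t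

/-- `u` is C² on ℝ × (0,∞): `u`, `u_t`, `u_r`, `u_rr` and the mixed partial `u_tr`
exist and are continuous there. -/
def IsC2On (u : ℝ → ℝ → ℝ) : Prop :=
  (∀ t r : ℝ, 0 < r → DifferentiableAt ℝ (fun s => u s r) t) ∧
  (∀ t r : ℝ, 0 < r → DifferentiableAt ℝ (fun s => u t s) r) ∧
  (∀ t r : ℝ, 0 < r → DifferentiableAt ℝ (deriv (fun s => u t s)) r) ∧
  (∀ t r : ℝ, 0 < r → DifferentiableAt ℝ (fun s => deriv (fun y => u s y) r) t) ∧
  ContinuousOn (fun q : ℝ × ℝ => u q.1 q.2) {q : ℝ × ℝ | 0 < q.2} ∧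
  ContinuousOn (fun q : ℝ × ℝ => partial_t u q.1 q.2) {q : ℝ × ℝ | 0 < q.2} ∧
  ContinuousOn (fun q : ℝ × ℝ => partial_r u q.1 q.2) {q : ℝ × ℝ | 0 < q.2} ∧
  ContinuousOn (fun q : ℝ × ℝ => partial_rr u q.1 q.2) {q : ℝ × ℝ | 0 < q.2} ∧
  ContinuousOn (fun q : ℝ × ℝ => partial_tr u q.1 q.2) {q : ℝ × ℝ | 0 < q.2}

/-- Group-invariant solutions of the radial p-Laplacian diffusion-reaction equation
with linear source, obtained by reduction under the combined time-dependent dilation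
and shift symmetry `k·X₆ + μ·X₃`. -/
theorem group_invariant_solution_dilation (κ k μ b c₁ c₂ n p : ℝ)
    (hκ : κ ≠ 0) (hk : k ≠ 0) (hn : n ≠ 0) (hp0 : p ≠ 0) (hp1 : p ≠ 1)
    (V : ℝ → ℝ)
    (hV1 : ∀ r : ℝ, 0 < r → DifferentiableAt ℝ V r)
    (hV2 : ∀ r : ℝ, 0 < r → DifferentiableAt ℝ (deriv V) r)
    (hVpos : ∀ r : ℝ, 0 < r → 0 < deriv V r)
    (hVeq : ∀ r : ℝ, 0 < r → deriv V r ^ p = c₁ * r ^ (1 - n) - (μ / (n * κ)) * r)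
    (u : ℝ → ℝ → ℝ)
    (hu : ∀ t r : ℝ,
      u t r = Real.exp (k * t) * (c₂ + V r)
        + (μ / ((p - 1) * k)) * Real.exp (k * p * t) - b / k) :
    ∀ t r : ℝ, 0 < r →
      0 < partial_r u t r ∧
      partial_t u t r
        = -κ * (p * partial_r u t r ^ (p - 1) * partial_rr u t r
            + ((n - 1) / r) * partial_r u t r ^ p)
          + k * u t r + b := by
  intro t r hr
  have hrne : r ≠ 0 := ne_of_gt hr
  set E : ℝ := Real.exp (k * t) with hE
  have hEpos : (0:ℝ) < E := Real.exp_pos _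
  set W : ℝ := deriv V r with hW
  have hWpos : 0 < W := hVpos r hr
  have hur : ∀ s : ℝ, 0 < s → HasDerivAt (fun y => u t y) (E * deriv V s) s := by
    intro s hs
    have h1 : HasDerivAt (fun y => E * (c₂ + V y) + (μ / ((p - 1) * k)) * Real.exp (k * p * t) - b / k)
        (E * deriv V s) s := by
      simpa using ((((hV1 s hs).hasDerivAt.const_add c₂).const_mul E).add_const
        ((μ / ((p - 1) * k)) * Real.exp (k * p * t))).sub_const (b / k)
    have heq : (fun y => u t y) = fun y => E * (c₂ + V y) + (μ / ((p - 1) * k)) * Real.exp (k * p * t) - b / k := by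
      funext y; rw [hu]
    rw [heq]
    exact h1
  have hpr : partial_r u t r = E * W := (hur r hr).deriv
  have hprpos : 0 < partial_r u t r := by rw [hpr]; positivity
  refine ⟨hprpos, ?_⟩
  have hprr : partial_rr u t r = E * deriv (deriv V) r := by
    have hev : deriv (fun y => u t y) =ᶠ[nhds r] fun s => E * deriv V s := by
      filter_upwards [IsOpen.mem_nhds isOpen_Ioi hr] with s hs
      exact (hur s hs).deriv
    have h3 : partial_rr u t r = deriv (fun s => E * deriv V s) r := by
      unfold partial_rr
      exact Filter.EventuallyEq.deriv_eq hev
    rw [h3, deriv_const_mul _ (hV2 r hr)]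
  have hpt : partial_t u t r
      = E * k * (c₂ + V r) + (μ / ((p - 1) * k)) * (Real.exp (k * p * t) * (k * p)) := by
    have h1 : HasDerivAt (fun s => Real.exp (k * s)) (Real.exp (k * t) * k) t := by
      simpa using ((hasDerivAt_id t).const_mul k).exp
    have h2 : HasDerivAt (fun s => Real.exp (k * p * s)) (Real.exp (k * p * t) * (k * p)) t := by
      simpa using ((hasDerivAt_id t).const_mul (k * p)).exp
    have h3 : HasDerivAt (fun s => Real.exp (k * s) * (c₂ + V r)
        + (μ / ((p - 1) * k)) * Real.exp (k * p * s) - b / k)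
        (Real.exp (k * t) * k * (c₂ + V r) + (μ / ((p - 1) * k)) * (Real.exp (k * p * t) * (k * p))) t :=
      ((h1.mul_const _).add (h2.const_mul _)).sub_const _
    have heq : (fun s => u s r) = fun s => Real.exp (k * s) * (c₂ + V r)
        + (μ / ((p - 1) * k)) * Real.exp (k * p * s) - b / k := by
      funext s; rw [hu]
    unfold partial_t
    rw [heq, h3.deriv, hE]
  have hode : p * W ^ (p - 1) * deriv (deriv V) r + ((n - 1) / r) * W ^ p = -(μ / κ) := by
    have hd1 : HasDerivAt (fun s => deriv V s ^ p)
        (deriv (deriv V) r * p * W ^ (p - 1)) r :=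
      (hV2 r hr).hasDerivAt.rpow_const (Or.inl (ne_of_gt hWpos))
    have hd2 : HasDerivAt (fun s : ℝ => c₁ * s ^ (1 - n) - (μ / (n * κ)) * s)
        (c₁ * ((1 - n) * r ^ (1 - n - 1)) - μ / (n * κ)) r := by
      have h5 := (Real.hasDerivAt_rpow_const (p := 1 - n) (Or.inl hrne)).const_mul c₁
      have h6 := h5.sub ((hasDerivAt_id' r).const_mul (μ / (n * κ)))
      rw [mul_one] at h6
      exact h6
    have hev : (fun s => deriv V s ^ p) =ᶠ[nhds r]
        fun s : ℝ => c₁ * s ^ (1 - n) - (μ / (n * κ)) * s := by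
      filter_upwards [IsOpen.mem_nhds isOpen_Ioi hr] with s hs
      exact hVeq s hs
    have hderiv_eq : deriv (deriv V) r * p * W ^ (p - 1)
        = c₁ * ((1 - n) * r ^ (1 - n - 1)) - μ / (n * κ) := by
      rw [← hd1.deriv, ← hd2.deriv]
      exact Filter.EventuallyEq.deriv_eq hev
    have hrpow : r ^ (1 - n) = r ^ (1 - n - 1) * r := by
      rw [← Real.rpow_add_one hrne]; ring_nf
    have hWp : W ^ p = c₁ * r ^ (1 - n) - (μ / (n * κ)) * r := hVeq r hr
    rw [hWp, hrpow]
    have h1 : p * W ^ (p - 1) * deriv (deriv V) r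
        = c₁ * ((1 - n) * r ^ (1 - n - 1)) - μ / (n * κ) := by
      rw [← hderiv_eq]; ring
    rw [h1]
    field_simp
    ring
  rw [hpt, hprr, hpr, hu t r]
  have hmul : (E * W) ^ (p - 1) = E ^ (p - 1) * W ^ (p - 1) :=
    Real.mul_rpow (le_of_lt hEpos) (le_of_lt hWpos)
  have hmul2 : (E * W) ^ p = E ^ p * W ^ p :=
    Real.mul_rpow (le_of_lt hEpos) (le_of_lt hWpos)
  have hEP : E ^ p = Real.exp (k * p * t) := by
    rw [hE, ← Real.exp_mul]; ring_nf
  have hE1 : E ^ (p - 1) * E = E ^ p := by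
    rw [← Real.rpow_add_one (ne_of_gt hEpos) (p - 1)]; ring_nf
  have key : -κ * (p * (E ^ (p - 1) * W ^ (p - 1)) * (E * deriv (deriv V) r)
      + ((n - 1) / r) * (E ^ p * W ^ p)) = μ * Real.exp (k * p * t) := by
    have h2 : p * (E ^ (p - 1) * W ^ (p - 1)) * (E * deriv (deriv V) r)
        + ((n - 1) / r) * (E ^ p * W ^ p)
        = E ^ p * (p * W ^ (p - 1) * deriv (deriv V) r + ((n - 1) / r) * W ^ p) := by
      rw [← hE1]; ring
    rw [h2, hode, ← hEP]
    field_simp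
  rw [hmul, hmul2, key]
  have hp1' : p - 1 ≠ 0 := sub_ne_zero.mpr hp1
  field_simp
  ring
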